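/- (T. L. Heath) Every even perfect number other than 6 can be written as the sum of consecutive odd cubes beginning with 1; that is, if N is an even perfect number with N ≠ 6, then there exists a natural number n ≥ 1 such that N = ∑_{k=1}^{n} (2k − 1)³. -/

import Mathlib

open ArithmeticFunction Finset Nat
open scoped ArithmeticFunction.sigma

private theorem aux_sigma_two_pow_eq_mersenne_succ (k : ℕ) :
    σ 1 (2 ^ k) = mersenne (k + 1) := by
  simp_rw [sigma_one_apply, mersenne, show 2 = 1 + 1 from rfl, ← geom_sum_mul_add 1 (k + 1)]
  norm_num

private theorem aux_eq_two_pow_mul_odd {n : ℕ} (hpos : 0 < n) :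
    ∃ k m : ℕ, n = 2 ^ k * m ∧ ¬Even m := by
  have h := Nat.finiteMultiplicity_iff.2 ⟨Nat.prime_two.ne_one, hpos⟩
  cases' pow_multiplicity_dvd 2 n with m hm
  use multiplicity 2 n, m
  refine ⟨hm, ?_⟩
  rw [even_iff_two_dvd]
  have hg := h.not_pow_dvd_of_multiplicity_lt (Nat.lt_succ_self _)
  contrapose! hg
  rcases hg with ⟨k, rfl⟩
  apply Dvd.intro k
  rw [pow_succ, mul_assoc, ← hm]

private theorem aux_eq_two_pow_mul_prime_mersenne_of_even_perfect {n : ℕ} (ev : Even n)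
    (perf : Nat.Perfect n) :
    ∃ k : ℕ, Nat.Prime (mersenne (k + 1)) ∧ n = 2 ^ k * mersenne (k + 1) := by
  have hpos := perf.2
  rcases aux_eq_two_pow_mul_odd hpos with ⟨k, m, rfl, hm⟩
  use k
  rw [even_iff_two_dvd] at hm
  rw [Nat.perfect_iff_sum_divisors_eq_two_mul hpos, ← sigma_one_apply,
    isMultiplicative_sigma.map_mul_of_coprime (Nat.prime_two.coprime_pow_of_not_dvd hm).symm,
    aux_sigma_two_pow_eq_mersenne_succ, ← mul_assoc, ← pow_succ'] at perf
  obtain ⟨j, rfl⟩ := ((Odd.coprime_two_right (by simp)).pow_right _).dvd_of_dvd_mul_left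
    (Dvd.intro _ perf)
  rw [← mul_assoc, mul_comm _ (mersenne _), mul_assoc] at perf
  have h := mul_left_cancel₀ (by positivity) perf
  rw [sigma_one_apply, Nat.sum_divisors_eq_sum_properDivisors_add_self, ← succ_mersenne, add_mul,
    one_mul, add_comm] at h
  have hj := add_left_cancel h
  cases Nat.sum_properDivisors_dvd (by rw [hj]; apply Dvd.intro_left (mersenne (k + 1)) rfl) with
  | inl h_1 =>
    have j1 : j = 1 := Eq.trans hj.symm h_1
    rw [j1, mul_one, Nat.sum_properDivisors_eq_one_iff_prime] at h_1
    simp [h_1, j1]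
  | inr h_1 =>
    have jcon := Eq.trans hj.symm h_1
    rw [← one_mul j, ← mul_assoc, mul_one] at jcon
    have jcon2 := mul_right_cancel₀ ?_ jcon
    · exfalso
      match k with
      | 0 =>
        apply hm
        rw [← jcon2, pow_zero, one_mul, one_mul] at ev
        rw [← jcon2, one_mul]
        exact even_iff_two_dvd.mp ev
      | .succ k =>
        apply _root_.ne_of_lt _ jcon2
        rw [mersenne, ← Nat.pred_eq_sub_one, Nat.lt_pred_iff, ← pow_one (Nat.succ 1)]
        apply pow_lt_pow_right₀ (Nat.lt_succ_self 1) (Nat.succ_lt_succ k.succ_pos)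
    contrapose! hm
    simp [hm]

private theorem aux_sum_odd_cubes (n : ℕ) :
    (∑ k ∈ Finset.Icc 1 n, (2 * k - 1) ^ 3) + n ^ 2 = 2 * n ^ 4 := by
  induction n with
  | zero => simp
  | succ n ih =>
    rw [Finset.sum_Icc_succ_top (by omega : 1 ≤ n + 1)]
    rw [show 2 * (n + 1) - 1 = 2 * n + 1 by omega]
    nlinarith [ih]

theorem even_perfect_sum_consecutive_odd_cubes (N : ℕ) (hperf : Nat.Perfect N)
    (heven : Even N) (hne : N ≠ 6) :
    ∃ n : ℕ, 1 ≤ n ∧ N = ∑ k ∈ Finset.Icc 1 n, (2 * k - 1) ^ 3 := by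
  obtain ⟨k, hpr, hN⟩ := aux_eq_two_pow_mul_prime_mersenne_of_even_perfect heven hperf
  -- k must be even: otherwise 3 ∣ mersenne (k+1), forcing N = 6
  have hk : Even k := by
    by_contra hodd
    obtain ⟨m, rfl⟩ := Nat.not_even_iff_odd.mp hodd
    have h41 : 1 ≤ (4:ℕ) ^ (m + 1) := Nat.one_le_pow _ _ (by norm_num)
    have hm4 : mersenne (2 * m + 1 + 1) = 4 ^ (m + 1) - 1 := by
      rw [mersenne, show 2 * m + 1 + 1 = 2 * (m + 1) by omega, pow_mul]
      norm_num
    have h4 : (4:ℕ) ^ (m + 1) ≡ 1 ^ (m + 1) [MOD 3] :=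
      Nat.ModEq.pow _ (by decide)
    have h3 : 3 ∣ mersenne (2 * m + 1 + 1) := by
      rw [hm4]
      have := (Nat.modEq_iff_dvd' h41).mp (by simpa using h4.symm)
      simpa using this
    rcases hpr.eq_one_or_self_of_dvd 3 h3 with h | h
    · norm_num at h
    · have h2 : (2:ℕ) ^ (2 * m + 1 + 1) = 2 ^ 2 := by
        have h21 : 1 ≤ (2:ℕ) ^ (2 * m + 1 + 1) := Nat.one_le_pow _ _ (by norm_num)
        have h' : (2:ℕ) ^ (2 * m + 1 + 1) - 1 = 3 := h.symm
        have := (Nat.sub_eq_iff_eq_add h21).mp h'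
        exact this.trans (by norm_num)
      have hm0 : m = 0 := by
        have := Nat.pow_right_injective (le_refl 2) h2
        omega
      subst hm0
      rw [← h] at hN
      norm_num at hN
      exact hne hN
  obtain ⟨m, rfl⟩ := hk
  refine ⟨2 ^ m, Nat.one_le_two_pow, ?_⟩
  have key := aux_sum_odd_cubes (2 ^ m)
  set c : ℕ := 2 ^ m * 2 ^ m with hc
  have hc1 : 1 ≤ c := Nat.one_le_iff_ne_zero.mpr (by positivity)
  have h1 : (2:ℕ) ^ (m + m) = c := by rw [pow_add]
  have h2 : (2:ℕ) ^ (m + m + 1) = 2 * c := by rw [pow_succ, h1]; ring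
  have hp2 : ((2:ℕ) ^ m) ^ 2 = c := by rw [pow_two]
  have hp4 : ((2:ℕ) ^ m) ^ 4 = c * c := by rw [hc]; ring
  rw [hp2, hp4] at key
  have hmer : mersenne (m + m + 1) = 2 * c - 1 := by rw [mersenne, h2]
  rw [h1, hmer] at hN
  have e1 : c * (2 * c - 1) + c = c * (2 * c) := by
    rw [← Nat.mul_succ]
    congr 1
    omega
  have e2 : N + c = (∑ k ∈ Finset.Icc 1 (2 ^ m), (2 * k - 1) ^ 3) + c := by
    rw [hN, e1, key]; ring
  exact Nat.add_right_cancel e2
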